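/- Let X be a nonzero real Banach space. If t(X) = 1, then T(X*) = 2, where X* denotes the topological dual of X with its canonical norm. -/

import Mathlib

noncomputable def thinness (X : Type*) [NormedAddCommGroup X] : ℝ :=
  sInf {r : ℝ | 0 < r ∧ ∀ (n : ℕ) (x : Fin n → X), (∀ i, ‖x i‖ = 1) →
    ∀ ε : ℝ, 0 < ε → ∃ y : X, ‖y‖ = 1 ∧ ∀ i, ‖x i - y‖ < r + ε}

noncomputable def thickness (X : Type*) [NormedAddCommGroup X] : ℝ :=
  sInf {r : ℝ | 0 < r ∧ ∃ (n : ℕ) (x : Fin n → X), (∀ i, ‖x i‖ = 1) ∧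
    Metric.closedBall (0 : X) 1 ⊆ ⋃ i, Metric.closedBall (x i) r}

lemma thin_finset {X : Type*} [NormedAddCommGroup X] [NormedSpace ℝ X] [Nontrivial X]
    (h : thinness X = 1) {δ : ℝ} (hδ : 0 < δ) (s : Set X) (hs : s.Finite)
    (hu : ∀ u ∈ s, ‖u‖ = 1) :
    ∃ y : X, ‖y‖ = 1 ∧ ∀ u ∈ s, ‖u - y‖ < 1 + δ ∧ ‖u + y‖ < 1 + δ := by
  classical
  set A := {r : ℝ | 0 < r ∧ ∀ (n : ℕ) (x : Fin n → X), (∀ i, ‖x i‖ = 1) →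
    ∀ ε : ℝ, 0 < ε → ∃ y : X, ‖y‖ = 1 ∧ ∀ i, ‖x i - y‖ < r + ε} with hA
  obtain ⟨y0, hy0⟩ : ∃ y : X, ‖y‖ = 1 := exists_norm_eq X zero_le_one
  have h3 : (3 : ℝ) ∈ A := by
    refine ⟨by norm_num, fun n x hx ε hε => ⟨y0, hy0, fun i => ?_⟩⟩
    have h1 := norm_sub_le (x i) y0
    rw [hx i, hy0] at h1
    linarith
  have hinf : sInf A = 1 := h
  have hlt : sInf A < 1 + δ / 2 := by rw [hinf]; linarith
  obtain ⟨a, haA, ha⟩ := exists_lt_of_csInf_lt ⟨3, h3⟩ hlt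
  -- build finite family including negatives
  set t : Set X := s ∪ (fun u => -u) '' s with ht
  have htf : t.Finite := hs.union (hs.image _)
  have htu : ∀ w ∈ t, ‖w‖ = 1 := by
    rintro w (hw | ⟨u, hu', rfl⟩)
    · exact hu w hw
    · rw [norm_neg]; exact hu u hu'
  set n := htf.toFinset.card with hn
  set e := htf.toFinset.equivFin with he
  set xf : Fin n → X := fun i => (e.symm i : X) with hxf
  have hxfu : ∀ i, ‖xf i‖ = 1 := by
    intro i
    apply htu
    have := (e.symm i).2
    rwa [htf.mem_toFinset] at this
  obtain ⟨y, hy, hyi⟩ := haA.2 n xf hxfu (1 + δ - a) (by linarith)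
  have hyt : ∀ w ∈ t, ‖w - y‖ < 1 + δ := by
    intro w hw
    have hw' : w ∈ htf.toFinset := htf.mem_toFinset.2 hw
    have : xf (e ⟨w, hw'⟩) = w := by simp [hxf]
    have h2 := hyi (e ⟨w, hw'⟩)
    rw [this] at h2
    linarith
  refine ⟨y, hy, fun u hu' => ⟨hyt u (Or.inl hu'), ?_⟩⟩
  have h2 := hyt (-u) (Or.inr ⟨u, hu', rfl⟩)
  have h3' : -u - y = -(u + y) := by abel
  rwa [h3', norm_neg] at h2

set_option maxHeartbeats 1000000 in
theorem thinness_one_implies_thickness_dual_two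
    (X : Type*) [NormedAddCommGroup X] [NormedSpace ℝ X] [CompleteSpace X] [Nontrivial X]
    (h : thinness X = 1) :
    thickness (StrongDual ℝ X) = 2 := by
  classical
  obtain ⟨z0, hz0⟩ : ∃ z : X, z ≠ 0 := exists_ne 0
  obtain ⟨f0, hf0, -⟩ := exists_dual_vector ℝ z0 (norm_ne_zero_iff.2 hz0)
  set B := {r : ℝ | 0 < r ∧ ∃ (n : ℕ) (x : Fin n → StrongDual ℝ X), (∀ i, ‖x i‖ = 1) ∧
    Metric.closedBall (0 : StrongDual ℝ X) 1 ⊆ ⋃ i, Metric.closedBall (x i) r} with hB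
  have h2 : (2 : ℝ) ∈ B := by
    refine ⟨by norm_num, 1, fun _ => f0, fun _ => hf0, fun g hg => ?_⟩
    simp only [Set.mem_iUnion, Metric.mem_closedBall]
    refine ⟨0, ?_⟩
    rw [dist_eq_norm]
    have h1 : ‖g‖ ≤ 1 := by rwa [Metric.mem_closedBall, dist_zero_right] at hg
    have h2' := norm_sub_le g f0
    rw [hf0] at h2'
    linarith
  have hlow : ∀ r ∈ B, 2 ≤ r := by
    rintro r ⟨hrpos, n, f, hf, hcov⟩
    by_contra hcon
    push_neg at hcon
    have key : ∀ δ : ℝ, 0 < δ → δ ≤ 1 / 2 → 2 - 14 * δ ≤ r * (1 + 5 * δ) := by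
      intro δ hδ hδ2
      -- choose almost-norming points x i
      have hxex : ∀ i, ∃ xi : X, ‖xi‖ = 1 ∧ 1 - δ < f i xi := by
        intro i
        have hnle : ¬ (‖f i‖ ≤ 1 - δ) := by rw [hf i]; linarith
        have hz : ∃ z : X, (1 - δ) * ‖z‖ < ‖f i z‖ := by
          by_contra hz
          push_neg at hz
          exact hnle ((f i).opNorm_le_bound (by linarith) hz)
        obtain ⟨z, hz⟩ := hz
        have hzne : z ≠ 0 := by
          rintro rfl
          simp at hz
        have hznorm : (0 : ℝ) < ‖z‖ := norm_pos_iff.2 hzne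
        rcases le_or_gt 0 (f i z) with hpos | hneg
        · refine ⟨‖z‖⁻¹ • z, ?_, ?_⟩
          · rw [norm_smul, norm_inv, norm_norm, inv_mul_cancel₀ hznorm.ne']
          · rw [map_smul, smul_eq_mul, lt_inv_mul_iff₀ hznorm]
            have hval : ‖f i z‖ = f i z := by rw [Real.norm_eq_abs, abs_of_nonneg hpos]
            rw [hval] at hz
            have hcc : ‖z‖ * (1 - δ) = (1 - δ) * ‖z‖ := mul_comm _ _
            linarith
        · refine ⟨-(‖z‖⁻¹ • z), ?_, ?_⟩
          · rw [norm_neg, norm_smul, norm_inv, norm_norm, inv_mul_cancel₀ hznorm.ne']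
          · rw [map_neg, map_smul, smul_eq_mul, ← mul_neg, lt_inv_mul_iff₀ hznorm]
            have hval : ‖f i z‖ = -(f i z) := by rw [Real.norm_eq_abs, abs_of_neg hneg]
            rw [hval] at hz
            have hcc : ‖z‖ * (1 - δ) = (1 - δ) * ‖z‖ := mul_comm _ _
            linarith
      choose x hx1 hx2 using hxex
      -- first application of thinness
      obtain ⟨y1, hy1, H1⟩ := thin_finset h hδ (Set.range x) (Set.finite_range x)
        (by rintro u ⟨i, rfl⟩; exact hx1 i)
      have A1 : ∀ i, ‖x i - y1‖ < 1 + δ := fun i => (H1 _ ⟨i, rfl⟩).1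
      have A2 : ∀ i, ‖x i + y1‖ < 1 + δ := fun i => (H1 _ ⟨i, rfl⟩).2
      have hgap : ∀ (w z : X), ‖w‖ = 1 → 2 - ‖w - z‖ ≤ ‖w + z‖ := by
        intro w z hw
        have h1 : ‖(w - z) + (w + z)‖ ≤ ‖w - z‖ + ‖w + z‖ := norm_add_le _ _
        have h2' : (w - z) + (w + z) = (2 : ℝ) • w := by
          rw [two_smul]; abel
        rw [h2', norm_smul, hw] at h1
        simp only [Real.norm_ofNat, mul_one] at h1
        linarith
      have A1' : ∀ i, 1 - δ < ‖x i + y1‖ := by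
        intro i
        have := hgap (x i) y1 (hx1 i)
        have := A1 i
        linarith [hgap (x i) y1 (hx1 i)]
      have A2' : ∀ i, 1 - δ < ‖x i - y1‖ := by
        intro i
        have h1 : ‖(x i + y1) + (x i - y1)‖ ≤ ‖x i + y1‖ + ‖x i - y1‖ := norm_add_le _ _
        have h2' : (x i + y1) + (x i - y1) = (2 : ℝ) • x i := by rw [two_smul]; abel
        rw [h2', norm_smul, hx1 i] at h1
        simp only [Real.norm_ofNat, mul_one] at h1
        have := A2 i
        linarith
      have hδ1 : δ < 1 := by linarith
      set wp : Fin n → X := fun i => ‖x i + y1‖⁻¹ • (x i + y1) with hwp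
      set wm : Fin n → X := fun i => ‖x i - y1‖⁻¹ • (x i - y1) with hwm
      have hwpn : ∀ i, ‖wp i‖ = 1 := by
        intro i
        have : (0:ℝ) < ‖x i + y1‖ := by linarith [A1' i]
        rw [hwp]
        simp only []
        rw [norm_smul, norm_inv, norm_norm, inv_mul_cancel₀ this.ne']
      have hwmn : ∀ i, ‖wm i‖ = 1 := by
        intro i
        have : (0:ℝ) < ‖x i - y1‖ := by linarith [A2' i]
        rw [hwm]
        simp only []
        rw [norm_smul, norm_inv, norm_norm, inv_mul_cancel₀ this.ne']
      -- second application of thinness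
      set s2 : Set X := Set.range x ∪ Set.range wp ∪ Set.range wm ∪ {y1} with hs2
      have hs2f : s2.Finite :=
        (((Set.finite_range x).union (Set.finite_range wp)).union (Set.finite_range wm)).union
          (Set.finite_singleton y1)
      have hs2u : ∀ u ∈ s2, ‖u‖ = 1 := by
        rintro u (((⟨i, rfl⟩ | ⟨i, rfl⟩) | ⟨i, rfl⟩) | rfl)
        · exact hx1 i
        · exact hwpn i
        · exact hwmn i
        · exact hy1
      obtain ⟨y2, hy2, H2⟩ := thin_finset h hδ s2 hs2f hs2u
      have B1m : ∀ i, ‖x i - y2‖ < 1 + δ := fun i =>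
        (H2 _ (Or.inl (Or.inl (Or.inl ⟨i, rfl⟩)))).1
      have B1p : ∀ i, ‖x i + y2‖ < 1 + δ := fun i =>
        (H2 _ (Or.inl (Or.inl (Or.inl ⟨i, rfl⟩)))).2
      have B2m : ‖y1 - y2‖ < 1 + δ := (H2 y1 (Or.inr rfl)).1
      have B2p : ‖y1 + y2‖ < 1 + δ := (H2 y1 (Or.inr rfl)).2
      have B3 : ∀ i, ‖wp i + y2‖ < 1 + δ := fun i =>
        (H2 _ (Or.inl (Or.inl (Or.inr ⟨i, rfl⟩)))).2
      have B4 : ∀ i, ‖wm i - y2‖ < 1 + δ := fun i =>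
        (H2 _ (Or.inl (Or.inr ⟨i, rfl⟩))).1
      set v : X := y1 + y2 with hv
      have hvup : ‖v‖ < 1 + δ := B2p
      have hvlo : 1 - δ < ‖v‖ := by
        have := hgap y1 y2 hy1
        linarith [hgap y1 y2 hy1, B2m]
      have hvpos : (0:ℝ) < ‖v‖ := by linarith
      have hvne : v ≠ 0 := norm_pos_iff.1 hvpos
      -- bounds on ‖x i ± v‖
      have scaled : ∀ (a : X) (sa : ℝ) (z : X), sa = ‖a‖ → 1 - δ < sa → sa < 1 + δ →
          ‖z‖ = 1 → ‖sa⁻¹ • a + z‖ < 1 + δ → ‖a + z‖ ≤ 1 + 4 * δ := by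
        intro a sa z hsa h1 h2' hz hb
        have hsapos : (0:ℝ) < sa := by linarith
        have hdecomp : a + z = sa • (sa⁻¹ • a + z) + (1 - sa) • z := by
          rw [smul_add, smul_inv_smul₀ hsapos.ne', sub_smul, one_smul]
          abel
        calc ‖a + z‖ = ‖sa • (sa⁻¹ • a + z) + (1 - sa) • z‖ := by rw [hdecomp]
          _ ≤ ‖sa • (sa⁻¹ • a + z)‖ + ‖(1 - sa) • z‖ := norm_add_le _ _
          _ = |sa| * ‖sa⁻¹ • a + z‖ + |1 - sa| * ‖z‖ := by
              rw [norm_smul, norm_smul, Real.norm_eq_abs, Real.norm_eq_abs]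
          _ ≤ sa * (1 + δ) + δ * 1 := by
              have h3 : |sa| = sa := abs_of_pos hsapos
              have h4 : |1 - sa| ≤ δ := by
                rw [abs_le]; constructor <;> linarith
              rw [h3, hz]
              have := mul_le_mul_of_nonneg_left hb.le hsapos.le
              nlinarith [hb.le]
          _ ≤ 1 + 4 * δ := by nlinarith
      have C1 : ∀ i, ‖x i + v‖ ≤ 1 + 4 * δ := by
        intro i
        have : x i + v = (x i + y1) + y2 := by rw [hv]; abel
        rw [this]
        exact scaled (x i + y1) ‖x i + y1‖ y2 rfl (A1' i) (A2 i) hy2 (B3 i)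
      have C2 : ∀ i, ‖x i - v‖ ≤ 1 + 4 * δ := by
        intro i
        have : x i - v = (x i - y1) + (-y2) := by rw [hv]; abel
        rw [this]
        refine scaled (x i - y1) ‖x i - y1‖ (-y2) rfl (A2' i) (A1 i) (by rw [norm_neg]; exact hy2) ?_
        have : ‖x i - y1‖⁻¹ • (x i - y1) + -y2 = wm i - y2 := by rw [hwm]; abel_nf
        rw [this]
        exact B4 i
      -- norming functional of v
      obtain ⟨g, hg, hgv⟩ := exists_dual_vector ℝ v (norm_ne_zero_iff.2 hvne)
      have hgv' : g v = ‖v‖ := hgv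
      have hgle : ∀ z : X, g z ≤ ‖z‖ := by
        intro z
        have := (g : StrongDual ℝ X).le_opNorm z
        have h1 : g z ≤ ‖g z‖ := le_abs_self _
        rw [hg] at this
        simpa using le_trans h1 this
      have D1 : ∀ i, g (x i) ≤ 5 * δ := by
        intro i
        have h1 : g (x i + v) ≤ ‖x i + v‖ := hgle _
        have h2' : g (x i + v) = g (x i) + g v := map_add g _ _
        rw [h2', hgv'] at h1
        have := C1 i
        linarith
      have D2 : ∀ i, -(5 * δ) ≤ g (x i) := by
        intro i
        have h1 : g (v - x i) ≤ ‖v - x i‖ := hgle _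
        have h2' : g (v - x i) = g v - g (x i) := map_sub g _ _
        rw [h2', hgv'] at h1
        have h3 : ‖v - x i‖ = ‖x i - v‖ := norm_sub_rev _ _
        rw [h3] at h1
        have := C2 i
        linarith
      -- f i is small on y1, y2, v
      have E : ∀ i (z : X), ‖x i + z‖ < 1 + δ → ‖x i - z‖ < 1 + δ → |f i z| < 2 * δ := by
        intro i z hp hm
        have h1 : f i (x i + z) ≤ ‖x i + z‖ := by
          have := (f i).le_opNorm (x i + z)
          rw [hf i, one_mul] at this
          exact le_trans (le_abs_self _) this
        have h2' : f i (x i - z) ≤ ‖x i - z‖ := by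
          have := (f i).le_opNorm (x i - z)
          rw [hf i, one_mul] at this
          exact le_trans (le_abs_self _) this
        rw [map_add] at h1
        rw [map_sub] at h2'
        have := hx2 i
        rw [abs_lt]
        constructor <;> linarith
      have E1 := fun i => E i y1 (A2 i) (A1 i)
      have E2 := fun i => E i y2 (B1p i) (B1m i)
      have Ev : ∀ i, |f i v| < 4 * δ := by
        intro i
        have : f i v = f i y1 + f i y2 := by rw [hv, map_add]
        rw [this]
        have := abs_add_le (f i y1) (f i y2)
        have h1 := E1 i
        have h2' := E2 i
        linarith [abs_add_le (f i y1) (f i y2)]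
      -- the far point y
      set y : X := ‖v‖⁻¹ • v with hy
      have hyn : ‖y‖ = 1 := by
        rw [hy, norm_smul, norm_inv, norm_norm, inv_mul_cancel₀ hvpos.ne']
      have hgy : g y = 1 := by
        rw [hy, map_smul, smul_eq_mul, hgv', inv_mul_cancel₀ hvpos.ne']
      have hvinv : ‖v‖⁻¹ < 2 := by
        have h12 : (1:ℝ)/2 ≤ 1 - δ := by linarith
        have : (1:ℝ)/2 < ‖v‖ := by linarith
        calc ‖v‖⁻¹ < (1/2 : ℝ)⁻¹ := by
              apply inv_strictAnti₀ <;> linarith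
          _ = 2 := by norm_num
      have hfy : ∀ i, |f i y| ≤ 8 * δ := by
        intro i
        rw [hy, map_smul, smul_eq_mul, abs_mul, abs_inv, abs_norm]
        have h1 := Ev i
        have h2' : |f i v| ≤ 4 * δ := h1.le
        calc ‖v‖⁻¹ * |f i v| ≤ 2 * (4 * δ) := by
              apply mul_le_mul hvinv.le h2' (abs_nonneg _) (by norm_num)
          _ = 8 * δ := by ring
      have hxy : ∀ i, ‖x i - y‖ ≤ 1 + 5 * δ := by
        intro i
        have h1 : x i - y = (x i - v) + (v - y) := by abel
        have h2' : v - y = (1 - ‖v‖⁻¹) • v := by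
          rw [hy, sub_smul, one_smul]
        have h3 : ‖v - y‖ ≤ δ := by
          rw [h2', norm_smul, Real.norm_eq_abs]
          rw [show |1 - ‖v‖⁻¹| * ‖v‖ = |(1 - ‖v‖⁻¹) * ‖v‖| by
            rw [abs_mul, abs_norm]]
          rw [show (1 - ‖v‖⁻¹) * ‖v‖ = ‖v‖ - 1 by
            rw [sub_mul, one_mul, inv_mul_cancel₀ hvpos.ne']]
          rw [abs_le]
          constructor <;> linarith
        calc ‖x i - y‖ ≤ ‖x i - v‖ + ‖v - y‖ := by rw [h1]; exact norm_add_le _ _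
          _ ≤ (1 + 4 * δ) + δ := by have := C2 i; linarith [h3]
          _ = 1 + 5 * δ := by ring
      -- apply the covering to g
      have hgB : g ∈ Metric.closedBall (0 : StrongDual ℝ X) 1 := by
        rw [Metric.mem_closedBall, dist_zero_right, hg]
      obtain ⟨i, hi⟩ := Set.mem_iUnion.1 (hcov hgB)
      rw [Metric.mem_closedBall, dist_eq_norm] at hi
      -- final estimate
      have hfin : (g - f i) (y - x i) ≤ r * (1 + 5 * δ) := by
        have h1 : ‖(g - f i) (y - x i)‖ ≤ ‖g - f i‖ * ‖y - x i‖ :=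
          (g - f i).le_opNorm _
        have h2' : (g - f i) (y - x i) ≤ ‖(g - f i) (y - x i)‖ := le_abs_self _
        have h3 : ‖y - x i‖ = ‖x i - y‖ := norm_sub_rev _ _
        have h4 : ‖g - f i‖ * ‖y - x i‖ ≤ r * (1 + 5 * δ) := by
          rw [h3]
          apply mul_le_mul hi (hxy i) (norm_nonneg _) (by linarith)
        linarith
      have hexp : (g - f i) (y - x i) = g y - g (x i) - f i y + f i (x i) := by
        simp only [ContinuousLinearMap.sub_apply, map_sub]
        ring
      have hfyi := hfy i
      rw [abs_le] at hfyi
      have hD1 := D1 i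
      have hx2i := hx2 i
      rw [hexp, hgy] at hfin
      linarith
    -- derive the contradiction
    set δ : ℝ := min (1/2) ((2 - r) / (15 + 5 * r)) with hδdef
    have hr2 : 0 < 2 - r := by linarith
    have hden : (0:ℝ) < 15 + 5 * r := by linarith
    have hδpos : 0 < δ := lt_min (by norm_num) (div_pos hr2 hden)
    have hδhalf : δ ≤ 1/2 := min_le_left _ _
    have hδsmall : δ * (15 + 5 * r) ≤ 2 - r := by
      have := min_le_right (1/2 : ℝ) ((2 - r) / (15 + 5 * r))
      calc δ * (15 + 5 * r) ≤ ((2 - r) / (15 + 5 * r)) * (15 + 5 * r) := by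
            apply mul_le_mul_of_nonneg_right this hden.le
        _ = 2 - r := by field_simp
    have hk := key δ hδpos hδhalf
    nlinarith [hδpos, hrpos]
  exact le_antisymm (csInf_le ⟨0, fun r hr => hr.1.le⟩ h2) (le_csInf ⟨2, h2⟩ hlow)
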